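/- (Maximum-likelihood tree structure, equation (2) of the paper.) Let d ≥ 2, let X_1, …, X_d be finite nonempty alphabets, let z_1, …, z_n be n samples in X_1 × ⋯ × X_d whose empirical pmf P̂ satisfies P̂(x) > 0 for all x, and let T be a rooted spanning tree on {1,…,d} with root r and parent map π. Then the maximum of the log-likelihood Σ_{k=1}^n ln Q(z_k) over all pmfs Q with Q(x) > 0 that factorize along T (i.e., Q(x) = Q_{X_r}(x_r) · Π_{i ≠ r} Q_{X_i|X_{π(i)}}(x_i|x_{π(i)})) equals n · ( Σ_{i ≠ r} I(P̂_{X_i, X_{π(i)}}) − Σ_{i=1}^d H(P̂_{X_i}) ). In particular, since Σ_{i=1}^d H(P̂_{X_i}) does not depend on T, the spanning tree maximizing the likelihood is exactly the maximum-weight spanning tree with edge weights given by the empirical mutual informations I(P̂_e). -/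

import Mathlib

/-- Shannon entropy of a pmf `P` on a finite alphabet, with natural logarithm and the
convention `0 ln 0 = 0`. -/
noncomputable def entropy {A : Type*} [Fintype A] (P : A → ℝ) : ℝ :=
  ∑ a, -(P a * Real.log (P a))

/-- Mutual information of a joint pmf `P` on `A × B`: `I(P) = H(P1) + H(P2) − H(P)`. -/
noncomputable def mutualInfo {A B : Type*} [Fintype A] [Fintype B] (P : A × B → ℝ) : ℝ :=
  entropy (fun a => ∑ b, P (a, b)) + entropy (fun b => ∑ a, P (a, b)) - entropy P

/-- Kullback–Leibler divergence `D(P ‖ Q) = Σ_{a : P(a) > 0} P(a) ln(P(a)/Q(a))`. -/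
noncomputable def klDiv {A : Type*} [Fintype A] (P Q : A → ℝ) : ℝ :=
  ∑ a ∈ Finset.univ.filter (fun a => 0 < P a), P a * Real.log (P a / Q a)

/-- One-coordinate marginal `P_{X_i}` of a pmf `P` on a finite product. -/
noncomputable def marg {d : ℕ} {X : Fin d → Type*} [∀ i, Fintype (X i)]
    [∀ i, DecidableEq (X i)] (P : (∀ i, X i) → ℝ) (i : Fin d) : X i → ℝ :=
  fun a => ∑ x : ∀ j, X j, if x i = a then P x else 0

/-- Two-coordinate marginal `P_{X_i, X_j}` of a pmf `P` on a finite product. -/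
noncomputable def pairMarg {d : ℕ} {X : Fin d → Type*} [∀ i, Fintype (X i)]
    [∀ i, DecidableEq (X i)] (P : (∀ i, X i) → ℝ) (i j : Fin d) : X i × X j → ℝ :=
  fun p => ∑ x : ∀ j', X j', if x i = p.1 ∧ x j = p.2 then P x else 0

/-- Conditional pmf `P_{X_i | X_j}(a | b) = P_{X_i,X_j}(a,b) / P_{X_j}(b)`. -/
noncomputable def condProb {d : ℕ} {X : Fin d → Type*} [∀ i, Fintype (X i)]
    [∀ i, DecidableEq (X i)] (P : (∀ i, X i) → ℝ) (i j : Fin d) (a : X i) (b : X j) : ℝ :=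
  pairMarg P i j (a, b) / marg P j b

/-- The projection of `P` onto the rooted spanning tree with root `r` and parent map `π`:
`Q_T(x) = P_{X_r}(x_r) · Π_{i ≠ r} P_{X_i | X_{π(i)}}(x_i | x_{π(i)})`. -/
noncomputable def treeProj {d : ℕ} {X : Fin d → Type*} [∀ i, Fintype (X i)]
    [∀ i, DecidableEq (X i)] (P : (∀ i, X i) → ℝ) (r : Fin d) (π : Fin d → Fin d) :
    (∀ i, X i) → ℝ :=
  fun x => marg P r (x r) *
    ∏ i ∈ Finset.univ.filter (fun i => i ≠ r), condProb P i (π i) (x i) (x (π i))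

/-- Empirical distribution of the sample `z = (z_1,…,z_n)`:
`P̂(a) = (1/n) Σ_{k=1}^n 1{z_k = a}`. -/
noncomputable def empDist {A : Type*} [Fintype A] [DecidableEq A] {n : ℕ}
    (z : Fin n → A) : A → ℝ :=
  fun a => (∑ k, if z k = a then (1 : ℝ) else 0) / n

open Finset Function

set_option linter.unusedSectionVars false

section MLAux

lemma gibbs_ineq {A : Type*} [Fintype A] (P Q : A → ℝ) (hP : ∀ a, 0 < P a)
    (hQ : ∀ a, 0 < Q a) (hle : ∑ a, Q a ≤ ∑ a, P a) :
    ∑ a, P a * Real.log (Q a) ≤ ∑ a, P a * Real.log (P a) := by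
  have h : ∀ a, P a * Real.log (Q a) ≤ P a * Real.log (P a) + (Q a - P a) := by
    intro a
    have h1 : Real.log (Q a / P a) ≤ Q a / P a - 1 :=
      Real.log_le_sub_one_of_pos (div_pos (hQ a) (hP a))
    have h2 := mul_le_mul_of_nonneg_left h1 (hP a).le
    rw [Real.log_div (hQ a).ne' (hP a).ne', mul_sub, mul_sub,
      mul_div_cancel₀ _ (hP a).ne', mul_one] at h2
    linarith
  calc ∑ a, P a * Real.log (Q a) ≤ ∑ a, (P a * Real.log (P a) + (Q a - P a)) :=
        Finset.sum_le_sum fun a _ => h a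
    _ = ∑ a, P a * Real.log (P a) + (∑ a, Q a - ∑ a, P a) := by
        rw [Finset.sum_add_distrib, Finset.sum_sub_distrib]
    _ ≤ ∑ a, P a * Real.log (P a) := by linarith

variable {d : ℕ} {X : Fin d → Type*} [∀ i, Fintype (X i)] [∀ i, DecidableEq (X i)]

lemma sum_marg_mul (P : (∀ i, X i) → ℝ) (i : Fin d) (g : X i → ℝ) :
    ∑ a, marg P i a * g a = ∑ x, P x * g (x i) := by
  unfold marg
  calc ∑ a, (∑ x : ∀ j, X j, if x i = a then P x else 0) * g a
      = ∑ a, ∑ x : ∀ j, X j, if x i = a then P x * g a else 0 := by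
        simp [Finset.sum_mul, ite_mul]
    _ = ∑ x : ∀ j, X j, ∑ a, if x i = a then P x * g a else 0 := Finset.sum_comm
    _ = ∑ x, P x * g (x i) := by simp [Finset.sum_ite_eq]

lemma sum_pairMarg_mul (P : (∀ i, X i) → ℝ) (i j : Fin d) (g : X i → X j → ℝ) :
    ∑ p : X i × X j, pairMarg P i j p * g p.1 p.2 = ∑ x, P x * g (x i) (x j) := by
  unfold pairMarg
  rw [Fintype.sum_prod_type]
  calc ∑ a, ∑ b, (∑ x : ∀ j', X j', if x i = a ∧ x j = b then P x else 0) * g a b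
      = ∑ a, ∑ b, ∑ x : ∀ j', X j', if x i = a then (if x j = b then P x * g a b else 0) else 0 := by
        refine Finset.sum_congr rfl fun a _ => Finset.sum_congr rfl fun b _ => ?_
        rw [Finset.sum_mul]
        refine Finset.sum_congr rfl fun x _ => ?_
        by_cases h1 : x i = a <;> by_cases h2 : x j = b <;> simp [h1, h2]
    _ = ∑ a, ∑ x : ∀ j', X j', ∑ b, if x i = a then (if x j = b then P x * g a b else 0) else 0 := by
        exact Finset.sum_congr rfl fun a _ => Finset.sum_comm
    _ = ∑ x : ∀ j', X j', ∑ a, ∑ b, if x i = a then (if x j = b then P x * g a b else 0) else 0 :=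
        Finset.sum_comm
    _ = ∑ x, P x * g (x i) (x j) := by simp [Finset.sum_ite_eq]

lemma sum_pairMarg_fst (P : (∀ i, X i) → ℝ) (i j : Fin d) (a : X i) :
    ∑ b, pairMarg P i j (a, b) = marg P i a := by
  unfold pairMarg marg
  rw [Finset.sum_comm]
  refine Finset.sum_congr rfl fun x _ => ?_
  by_cases h : x i = a <;> simp [h, Finset.sum_ite_eq]

lemma sum_pairMarg_snd (P : (∀ i, X i) → ℝ) (i j : Fin d) (b : X j) :
    ∑ a, pairMarg P i j (a, b) = marg P j b := by
  unfold pairMarg marg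
  rw [Finset.sum_comm]
  refine Finset.sum_congr rfl fun x _ => ?_
  by_cases h : x j = b
  · simp [h, Finset.sum_ite_eq, and_comm]
  · simp [h]

lemma sum_marg (P : (∀ i, X i) → ℝ) (i : Fin d) : ∑ a, marg P i a = ∑ x, P x := by
  have := sum_marg_mul P i (fun _ => 1)
  simpa using this

variable [∀ i, Nonempty (X i)]

lemma marg_pos (P : (∀ i, X i) → ℝ) (hP : ∀ x, 0 < P x) (i : Fin d) (a : X i) :
    0 < marg P i a := by
  unfold marg
  refine Finset.sum_pos' (fun x _ => by split <;> simp [(hP x).le]) ?_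
  refine ⟨Function.update (Classical.arbitrary _) i a, Finset.mem_univ _, ?_⟩
  simp [Function.update_self, hP]

lemma pairMarg_pos (P : (∀ i, X i) → ℝ) (hP : ∀ x, 0 < P x) (i j : Fin d) (hij : i ≠ j)
    (a : X i) (b : X j) : 0 < pairMarg P i j (a, b) := by
  unfold pairMarg
  refine Finset.sum_pos' (fun x _ => by split <;> simp [(hP x).le]) ?_
  refine ⟨Function.update (Function.update (Classical.arbitrary _) j b) i a, Finset.mem_univ _, ?_⟩
  simp [Function.update_self, Function.update_of_ne (Ne.symm hij), hP]


lemma upd_splitAt (j : Fin d) (x : ∀ i, X i) (a : X j) :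
    Function.update x j a = (Equiv.piSplitAt j X).symm (a, fun k => x k.1) := by
  funext k
  rw [Equiv.piSplitAt_symm_apply]
  unfold Function.update
  by_cases h : k = j
  · subst h; simp
  · simp [h]

lemma sum_update (j : Fin d) (F : (∀ i, X i) → ℝ) :
    ∑ a : X j, ∑ x : ∀ i, X i, F (Function.update x j a)
      = (Fintype.card (X j) : ℝ) * ∑ x : ∀ i, X i, F x := by
  have key : ∀ (G : (∀ i, X i) → ℝ), ∑ x : ∀ i, X i, G x
      = ∑ p : X j × (∀ k : {k // k ≠ j}, X k.1), G ((Equiv.piSplitAt j X).symm p) :=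
    fun G => (Fintype.sum_equiv (Equiv.piSplitAt j X).symm _ _ (fun p => rfl)).symm
  calc ∑ a : X j, ∑ x : ∀ i, X i, F (Function.update x j a)
      = ∑ a : X j, ∑ p : X j × (∀ k : {k // k ≠ j}, X k.1),
          F ((Equiv.piSplitAt j X).symm (a, p.2)) := by
        refine Finset.sum_congr rfl fun a _ => ?_
        rw [key (fun x => F (Function.update x j a))]
        refine Finset.sum_congr rfl fun p _ => ?_
        have hp : (fun (k : {k // k ≠ j}) => (Equiv.piSplitAt j X).symm p k.1) = p.2 := by
          funext k
          rw [Equiv.piSplitAt_symm_apply, dif_neg k.2]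
        rw [upd_splitAt, hp]
    _ = ∑ a : X j, ∑ b : X j, ∑ y : ∀ k : {k // k ≠ j}, X k.1,
          F ((Equiv.piSplitAt j X).symm (a, y)) := by
        refine Finset.sum_congr rfl fun a _ => ?_
        rw [Fintype.sum_prod_type]
    _ = (Fintype.card (X j) : ℝ) * ∑ a : X j, ∑ y : ∀ k : {k // k ≠ j}, X k.1,
          F ((Equiv.piSplitAt j X).symm (a, y)) := by
        rw [Finset.sum_comm, Finset.sum_const, nsmul_eq_mul, Fintype.card]
    _ = (Fintype.card (X j) : ℝ) * ∑ x : ∀ i, X i, F x := by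
        rw [key F, Fintype.sum_prod_type]

lemma elim' (j j' : Fin d) (hjj' : j' ≠ j) (A : (∀ i, X i) → ℝ)
    (hA : ∀ x a, A (Function.update x j a) = A x)
    (h : X j' → X j → ℝ) (h' : X j' → ℝ) (hh : ∀ a, ∑ b, h a b = h' a) :
    (Fintype.card (X j) : ℝ) * ∑ x, A x * h (x j') (x j)
      = ∑ x, A x * h' (x j') := by
  rw [← sum_update j (fun x => A x * h (x j') (x j))]
  calc ∑ a : X j, ∑ x : ∀ i, X i,
        A (Function.update x j a) * h (Function.update x j a j') (Function.update x j a j)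
      = ∑ a : X j, ∑ x : ∀ i, X i, A x * h (x j') a := by
        refine Finset.sum_congr rfl fun a _ => Finset.sum_congr rfl fun x _ => ?_
        rw [hA, Function.update_self, Function.update_of_ne hjj']
    _ = ∑ x : ∀ i, X i, ∑ a : X j, A x * h (x j') a := Finset.sum_comm
    _ = ∑ x, A x * h' (x j') := by
        refine Finset.sum_congr rfl fun x _ => ?_
        rw [← Finset.mul_sum, hh]


lemma count1 (i : Fin d) (a : X i) :
    ∑ x : ∀ k, X k, (if x i = a then (1:ℝ) else 0)
      = ∏ k ∈ Finset.univ.erase i, (Fintype.card (X k) : ℝ) := by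
  have h := sum_update i (fun x => if x i = a then (1:ℝ) else 0)
  have hL : ∑ b : X i, ∑ x : ∀ k, X k,
      (if Function.update x i b i = a then (1:ℝ) else 0)
      = ∏ k, (Fintype.card (X k) : ℝ) := by
    simp only [Function.update_self]
    rw [Finset.sum_comm]
    simp [Finset.sum_ite_eq, Fintype.card_pi]
  rw [hL] at h
  have hprod : ∏ k, (Fintype.card (X k) : ℝ)
      = (Fintype.card (X i) : ℝ) * ∏ k ∈ Finset.univ.erase i, (Fintype.card (X k) : ℝ) :=
    (Finset.mul_prod_erase _ _ (Finset.mem_univ i)).symm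
  rw [hprod] at h
  have hc : (Fintype.card (X i) : ℝ) ≠ 0 := by
    exact_mod_cast Fintype.card_ne_zero
  exact (mul_left_cancel₀ hc h.symm)

lemma count2 (i j : Fin d) (hij : i ≠ j) (a : X i) (b : X j) :
    ∑ x : ∀ k, X k, (if x i = a ∧ x j = b then (1:ℝ) else 0)
      = ∏ k ∈ (Finset.univ.erase j).erase i, (Fintype.card (X k) : ℝ) := by
  have h := sum_update i (fun x => if x i = a ∧ x j = b then (1:ℝ) else 0)
  have hL : ∑ c : X i, ∑ x : ∀ k, X k,
      (if Function.update x i c i = a ∧ Function.update x i c j = b then (1:ℝ) else 0)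
      = ∏ k ∈ Finset.univ.erase j, (Fintype.card (X k) : ℝ) := by
    simp only [Function.update_self, Function.update_of_ne (Ne.symm hij)]
    rw [Finset.sum_comm]
    have : ∀ x : ∀ k, X k, ∑ c : X i, (if c = a ∧ x j = b then (1:ℝ) else 0)
        = (if x j = b then (1:ℝ) else 0) := by
      intro x
      by_cases hxb : x j = b <;> simp [hxb, Finset.sum_ite_eq']
    rw [Finset.sum_congr rfl fun x _ => this x]
    exact count1 j b
  rw [hL] at h
  have hmem : i ∈ Finset.univ.erase j := Finset.mem_erase.2 ⟨hij, Finset.mem_univ i⟩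
  rw [← Finset.mul_prod_erase _ _ hmem] at h
  have hc : (Fintype.card (X i) : ℝ) ≠ 0 := by exact_mod_cast Fintype.card_ne_zero
  exact (mul_left_cancel₀ hc h.symm)

lemma sum_fun_one (i : Fin d) (F : X i → ℝ) :
    ∑ x : ∀ k, X k, F (x i)
      = (∏ k ∈ Finset.univ.erase i, (Fintype.card (X k) : ℝ)) * ∑ a, F a := by
  calc ∑ x : ∀ k, X k, F (x i)
      = ∑ x : ∀ k, X k, ∑ a, (if x i = a then (1:ℝ) else 0) * F a := by
        refine Finset.sum_congr rfl fun x _ => ?_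
        simp [Finset.sum_ite_eq, ite_mul]
    _ = ∑ a, (∑ x : ∀ k, X k, (if x i = a then (1:ℝ) else 0)) * F a := by
        rw [Finset.sum_comm]
        exact Finset.sum_congr rfl fun a _ => (Finset.sum_mul _ _ _).symm
    _ = ∑ a, (∏ k ∈ Finset.univ.erase i, (Fintype.card (X k) : ℝ)) * F a := by
        refine Finset.sum_congr rfl fun a _ => ?_
        rw [count1]
    _ = _ := by rw [← Finset.mul_sum]

lemma sum_fun_two (i j : Fin d) (hij : i ≠ j) (F : X i → X j → ℝ) :
    ∑ x : ∀ k, X k, F (x i) (x j)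
      = (∏ k ∈ (Finset.univ.erase j).erase i, (Fintype.card (X k) : ℝ))
        * ∑ a, ∑ b, F a b := by
  calc ∑ x : ∀ k, X k, F (x i) (x j)
      = ∑ x : ∀ k, X k, ∑ a, ∑ b, (if x i = a ∧ x j = b then (1:ℝ) else 0) * F a b := by
        refine Finset.sum_congr rfl fun x _ => ?_
        have : ∀ (a : X i) (b : X j), (if x i = a ∧ x j = b then (1:ℝ) else 0) * F a b
            = if x i = a then (if x j = b then F a b else 0) else 0 := by
          intro a b
          by_cases h1 : x i = a <;> by_cases h2 : x j = b <;> simp [h1, h2]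
        simp only [this]
        simp [Finset.sum_ite_eq]
    _ = ∑ a, ∑ b, (∑ x : ∀ k, X k, (if x i = a ∧ x j = b then (1:ℝ) else 0)) * F a b := by
        rw [Finset.sum_comm]
        refine Finset.sum_congr rfl fun a _ => ?_
        rw [Finset.sum_comm]
        refine Finset.sum_congr rfl fun b _ => (Finset.sum_mul _ _ _).symm
    _ = ∑ a, ∑ b, (∏ k ∈ (Finset.univ.erase j).erase i, (Fintype.card (X k) : ℝ)) * F a b := by
        refine Finset.sum_congr rfl fun a _ => Finset.sum_congr rfl fun b _ => ?_
        rw [count2 i j hij]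
    _ = _ := by
        simp_rw [← Finset.mul_sum]


variable {r : Fin d} {pa : Fin d → Fin d}

lemma dep_succ (htree : ∀ i, ∃ k, pa^[k] i = r) (i : Fin d) (hi : i ≠ r) :
    Nat.find (htree i) = Nat.find (htree (pa i)) + 1 := by
  have hm := Nat.find_spec (htree i)
  have hm1 : 1 ≤ Nat.find (htree i) := by
    rcases Nat.eq_zero_or_pos (Nat.find (htree i)) with h | h
    · rw [h] at hm; simp at hm; exact absurd hm hi
    · exact h
  have h1 : pa^[Nat.find (htree i) - 1] (pa i) = r := by
    rw [← Function.iterate_succ_apply, Nat.succ_eq_add_one, Nat.sub_add_cancel hm1]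
    exact hm
  have h2 : Nat.find (htree (pa i)) ≤ Nat.find (htree i) - 1 := Nat.find_le h1
  have h3 : Nat.find (htree i) ≤ Nat.find (htree (pa i)) + 1 := by
    apply Nat.find_le
    rw [Function.iterate_succ_apply]
    exact Nat.find_spec (htree (pa i))
  omega

lemma pi_ne_self (htree : ∀ i, ∃ k, pa^[k] i = r) (i : Fin d) (hi : i ≠ r) : pa i ≠ i := by
  intro h
  have := Function.iterate_fixed h (Nat.find (htree i))
  rw [Nat.find_spec (htree i)] at this
  exact hi this.symm

lemma sum_condProb_eq_one (P : (∀ i, X i) → ℝ) (hP : ∀ x, 0 < P x) (i j : Fin d) (b : X j) :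
    ∑ a, condProb P i j a b = 1 := by
  unfold condProb
  rw [← Finset.sum_div, sum_pairMarg_snd, div_self (marg_pos P hP j b).ne']

lemma prune (P : (∀ i, X i) → ℝ) (hP : ∀ x, 0 < P x)
    (htree : ∀ i, ∃ k, pa^[k] i = r) :
    ∀ (N : ℕ) (S : Finset (Fin d)), S.card ≤ N → r ∉ S → (∀ i ∈ S, pa i ∈ S ∨ pa i = r) →
    ∀ (C : Finset (Fin d)), C ⊆ S → (∀ i ∈ C, pa i ∈ C ∨ pa i = r) →
    ∀ (g : (∀ i, X i) → ℝ),
      (∀ (x : ∀ i, X i) (j : Fin d) (a : X j), j ∉ C → j ≠ r →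
        g (Function.update x j a) = g x) →
    ∑ x, (marg P r (x r) * ∏ i ∈ C, condProb P i (pa i) (x i) (x (pa i))) * g x
      = (∏ i ∈ S \ C, (Fintype.card (X i) : ℝ)) *
        ∑ x, (marg P r (x r) * ∏ i ∈ S, condProb P i (pa i) (x i) (x (pa i))) * g x := by
  intro N
  induction N with
  | zero =>
    intro S hcard hSr hScl C hCS hCcl g hg
    have hS : S = ∅ := Finset.card_eq_zero.1 (Nat.le_zero.1 hcard)
    have hC : C = ∅ := Finset.subset_empty.1 (hS ▸ hCS)
    rw [hS, hC]
    simp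
  | succ N ih =>
    intro S hcard hSr hScl C hCS hCcl g hg
    by_cases hSC : S ⊆ C
    · have hSeq : S = C := Finset.Subset.antisymm hSC hCS
      rw [hSeq, Finset.sdiff_self]
      simp
    · have hne : (S \ C).Nonempty := by
        rw [Finset.sdiff_nonempty]; exact hSC
      obtain ⟨j, hjmem, hjmax⟩ :=
        Finset.exists_max_image (S \ C) (fun i => Nat.find (htree i)) hne
      have hjS : j ∈ S := (Finset.mem_sdiff.1 hjmem).1
      have hjC : j ∉ C := (Finset.mem_sdiff.1 hjmem).2
      have hjr : j ≠ r := fun h => hSr (h ▸ hjS)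
      have hpij : pa j ≠ j := pi_ne_self htree j hjr
      have hnochild : ∀ i ∈ S, i ≠ j → pa i ≠ j := by
        intro i hiS hij hpi
        by_cases hiC : i ∈ C
        · rcases hCcl i hiC with h | h
          · exact hjC (hpi ▸ h)
          · exact hjr (by rw [← hpi, h])
        · have hir : i ≠ r := fun h => hSr (h ▸ hiS)
          have := dep_succ htree i hir
          rw [hpi] at this
          have hle := hjmax i (Finset.mem_sdiff.2 ⟨hiS, hiC⟩)
          omega
      -- the invariant part
      set A : (∀ i, X i) → ℝ := fun x =>
        (marg P r (x r) * ∏ i ∈ S.erase j, condProb P i (pa i) (x i) (x (pa i))) * g x with hA_def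
      have hA : ∀ x a, A (Function.update x j a) = A x := by
        intro x a
        simp only [hA_def]
        rw [Function.update_of_ne (Ne.symm hjr), hg x j a hjC hjr]
        congr 2
        refine Finset.prod_congr rfl fun i hi => ?_
        have hij : i ≠ j := (Finset.mem_erase.1 hi).1
        have hpij' : pa i ≠ j := hnochild i (Finset.mem_of_mem_erase hi) hij
        rw [Function.update_of_ne hij, Function.update_of_ne hpij']
      have helim := elim' j (pa j) hpij A hA
        (fun b a => condProb P j (pa j) a b) (fun _ => 1)
        (fun b => sum_condProb_eq_one P hP j (pa j) b)
      have hW : ∀ x, (marg P r (x r) * ∏ i ∈ S, condProb P i (pa i) (x i) (x (pa i))) * g x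
          = A x * condProb P j (pa j) (x j) (x (pa j)) := by
        intro x
        simp only [hA_def]
        rw [← Finset.mul_prod_erase S _ hjS]
        ring
      have hstep : (Fintype.card (X j) : ℝ) *
          ∑ x, (marg P r (x r) * ∏ i ∈ S, condProb P i (pa i) (x i) (x (pa i))) * g x
          = ∑ x, (marg P r (x r) * ∏ i ∈ S.erase j, condProb P i (pa i) (x i) (x (pa i))) * g x := by
        calc (Fintype.card (X j) : ℝ) * ∑ x, (marg P r (x r) *
              ∏ i ∈ S, condProb P i (pa i) (x i) (x (pa i))) * g x
            = (Fintype.card (X j) : ℝ) * ∑ x, A x * condProb P j (pa j) (x j) (x (pa j)) := by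
              rw [Finset.sum_congr rfl fun x _ => hW x]
          _ = ∑ x, A x * 1 := helim
          _ = _ := by simp only [mul_one, hA_def]
      have ihS := ih (S.erase j) (by
          have := Finset.card_erase_of_mem hjS
          omega)
        (fun h => hSr (Finset.mem_of_mem_erase h))
        (fun i hi => by
          rcases hScl i (Finset.mem_of_mem_erase hi) with h | h
          · left
            exact Finset.mem_erase.2 ⟨hnochild i (Finset.mem_of_mem_erase hi)
              (Finset.mem_erase.1 hi).1, h⟩
          · right; exact h)
        C (fun c hc => Finset.mem_erase.2 ⟨fun h => hjC (h ▸ hc), hCS hc⟩) hCcl g hg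
      rw [ihS]
      have hsdiff : (S.erase j) \ C = (S \ C).erase j := by
        ext k
        simp only [Finset.mem_sdiff, Finset.mem_erase]
        tauto
      rw [hsdiff, ← hstep, ← Finset.mul_prod_erase (S \ C) _ hjmem]
      ring

lemma chain (P : (∀ i, X i) → ℝ) (hP : ∀ x, 0 < P x) :
    ∀ (m : ℕ), 1 ≤ m → ∀ (i0 : Fin d),
    (∀ s t, s ≤ m → t ≤ m → pa^[s] i0 = pa^[t] i0 → s = t) →
    ∀ (g0 : X i0 → X (pa i0) → ℝ),
    ∑ x : ∀ k, X k, (marg P (pa^[m] i0) (x (pa^[m] i0)) *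
        ∏ i ∈ (Finset.range m).image (fun t => pa^[t] i0),
          condProb P i (pa i) (x i) (x (pa i)))
        * g0 (x i0) (x (pa i0))
    = (∏ k ∈ Finset.univ \ insert (pa^[m] i0) ((Finset.range m).image (fun t => pa^[t] i0)),
        (Fintype.card (X k) : ℝ)) * ∑ a, ∑ b, pairMarg P i0 (pa i0) (a, b) * g0 a b := by
  intro m
  induction m with
  | zero => omega
  | succ m ih =>
    intro _ i0 hinj g0
    by_cases hm0 : m = 0
    · -- base case m+1 = 1
      subst hm0
      have h01 : i0 ≠ pa i0 := by
        intro h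
        exact absurd (hinj 0 1 (by omega) (by omega) (by simpa using h)) (by omega)
      simp only [Nat.zero_add, Finset.range_one, Finset.image_singleton,
        Finset.prod_singleton, Function.iterate_one, Function.iterate_zero_apply,
        Function.iterate_succ_apply]
      have hpt : ∀ x : ∀ k, X k,
          (marg P (pa i0) (x (pa i0)) * condProb P i0 (pa i0) (x i0) (x (pa i0)))
            * g0 (x i0) (x (pa i0))
          = (fun a b => pairMarg P i0 (pa i0) (a, b) * g0 a b) (x i0) (x (pa i0)) := by
        intro x
        simp only [condProb]
        rw [mul_div_cancel₀]
        exact (marg_pos P hP (pa i0) (x (pa i0))).ne'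
      rw [Finset.sum_congr rfl fun x _ => hpt x,
        sum_fun_two i0 (pa i0) h01 (fun a b => pairMarg P i0 (pa i0) (a, b) * g0 a b)]
      congr 1
      refine Finset.prod_congr ?_ fun _ _ => rfl
      ext k
      simp only [Finset.mem_erase, Finset.mem_sdiff, Finset.mem_univ, Finset.mem_insert,
        Finset.mem_singleton, true_and]
      tauto
    · have hm1 : 1 ≤ m := by omega
      -- abbreviations
      have hiter : pa^[m+1] i0 = pa (pa^[m] i0) := Function.iterate_succ_apply' pa m i0
      have hrange : (Finset.range (m+1)).image (fun t => pa^[t] i0)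
          = insert (pa^[m] i0) ((Finset.range m).image (fun t => pa^[t] i0)) := by
        rw [Finset.range_add_one, Finset.image_insert]
      have hcmnot : pa^[m] i0 ∉ (Finset.range m).image (fun t => pa^[t] i0) := by
        intro h
        obtain ⟨t, ht, hteq⟩ := Finset.mem_image.1 h
        rw [Finset.mem_range] at ht
        exact absurd (hinj t m (by omega) (by omega) hteq) (by omega)
      have hrnot : pa^[m+1] i0 ∉ insert (pa^[m] i0) ((Finset.range m).image (fun t => pa^[t] i0)) := by
        intro h
        rcases Finset.mem_insert.1 h with h | h
        · exact absurd (hinj (m+1) m (by omega) (by omega) h) (by omega)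
        · obtain ⟨t, ht, hteq⟩ := Finset.mem_image.1 h
          rw [Finset.mem_range] at ht
          exact absurd (hinj (m+1) t (by omega) (by omega) hteq.symm) (by omega)
      have hcne : pa^[m] i0 ≠ pa (pa^[m] i0) := by
        intro h
        rw [← hiter] at h
        exact absurd (hinj m (m+1) (by omega) (by omega) h) (by omega)
      set A : (∀ i, X i) → ℝ := fun x =>
        (∏ i ∈ (Finset.range m).image (fun t => pa^[t] i0),
          condProb P i (pa i) (x i) (x (pa i))) * g0 (x i0) (x (pa i0)) with hA_def
      have hA : ∀ x a, A (Function.update x (pa (pa^[m] i0)) a) = A x := by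
        intro x a
        simp only [hA_def]
        have hne1 : i0 ≠ pa (pa^[m] i0) := by
          rw [← hiter]
          intro h
          exact absurd (hinj 0 (m+1) (by omega) (by omega) (by simpa using h)) (by omega)
        have hne2 : pa i0 ≠ pa (pa^[m] i0) := by
          rw [← hiter]
          intro h
          exact absurd (hinj 1 (m+1) (by omega) (by omega) (by simpa using h)) (by omega)
        rw [Function.update_of_ne hne1, Function.update_of_ne hne2]
        congr 1
        refine Finset.prod_congr rfl fun i hi => ?_
        obtain ⟨t, ht, hteq⟩ := Finset.mem_image.1 hi
        rw [Finset.mem_range] at ht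
        have hne3 : i ≠ pa (pa^[m] i0) := by
          rw [← hiter, ← hteq]
          intro h
          exact absurd (hinj t (m+1) (by omega) (by omega) h) (by omega)
        have hne4 : pa i ≠ pa (pa^[m] i0) := by
          rw [← hiter, ← hteq, ← Function.iterate_succ_apply' pa t i0]
          intro h
          exact absurd (hinj (t+1) (m+1) (by omega) (by omega) h) (by omega)
        rw [Function.update_of_ne hne3, Function.update_of_ne hne4]
      have helim := elim' (pa (pa^[m] i0)) (pa^[m] i0) hcne A hA
        (fun a b => marg P (pa (pa^[m] i0)) b * condProb P (pa^[m] i0) (pa (pa^[m] i0)) a b)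
        (fun a => marg P (pa^[m] i0) a)
        (fun a => by
          have : ∀ b, marg P (pa (pa^[m] i0)) b
              * condProb P (pa^[m] i0) (pa (pa^[m] i0)) a b
              = pairMarg P (pa^[m] i0) (pa (pa^[m] i0)) (a, b) := by
            intro b
            simp only [condProb]
            rw [mul_div_cancel₀]
            exact (marg_pos P hP _ b).ne'
          rw [Finset.sum_congr rfl fun b _ => this b, sum_pairMarg_fst])
      have hWeq : ∀ x : ∀ k, X k,
          (marg P (pa^[m+1] i0) (x (pa^[m+1] i0)) *
            ∏ i ∈ (Finset.range (m+1)).image (fun t => pa^[t] i0),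
              condProb P i (pa i) (x i) (x (pa i))) * g0 (x i0) (x (pa i0))
          = A x * (marg P (pa (pa^[m] i0)) (x (pa (pa^[m] i0))) *
              condProb P (pa^[m] i0) (pa (pa^[m] i0)) (x (pa^[m] i0)) (x (pa (pa^[m] i0)))) := by
        intro x
        simp only [hA_def, hrange]
        rw [Finset.prod_insert hcmnot]
        rw [hiter]  -- rewrite pa^[m+1] i0 in marg and x; also inside condProb at pa^[m] i0 position
        ring
      have hsum1 : (Fintype.card (X (pa (pa^[m] i0))) : ℝ) *
          ∑ x : ∀ k, X k, (marg P (pa^[m+1] i0) (x (pa^[m+1] i0)) *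
            ∏ i ∈ (Finset.range (m+1)).image (fun t => pa^[t] i0),
              condProb P i (pa i) (x i) (x (pa i))) * g0 (x i0) (x (pa i0))
          = ∑ x : ∀ k, X k, A x * marg P (pa^[m] i0) (x (pa^[m] i0)) := by
        rw [Finset.sum_congr rfl fun x _ => hWeq x]
        exact helim
      have hsum2 : ∑ x : ∀ k, X k, A x * marg P (pa^[m] i0) (x (pa^[m] i0))
          = ∑ x : ∀ k, X k, (marg P (pa^[m] i0) (x (pa^[m] i0)) *
            ∏ i ∈ (Finset.range m).image (fun t => pa^[t] i0),
              condProb P i (pa i) (x i) (x (pa i))) * g0 (x i0) (x (pa i0)) := by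
        refine Finset.sum_congr rfl fun x _ => ?_
        simp only [hA_def]
        ring
      have hih := ih hm1 i0 (fun s t hs ht h => hinj s t (by omega) (by omega) h) g0
      have hmem : pa^[m+1] i0 ∈ Finset.univ \ insert (pa^[m] i0)
          ((Finset.range m).image (fun t => pa^[t] i0)) := by
        rw [Finset.mem_sdiff]
        refine ⟨Finset.mem_univ _, ?_⟩
        intro h
        apply hrnot
        rcases Finset.mem_insert.1 h with h | h
        · exact Finset.mem_insert.2 (Or.inl h)
        · exact Finset.mem_insert.2 (Or.inr h)
      have hprodsplit : ∏ k ∈ Finset.univ \ insert (pa^[m] i0)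
            ((Finset.range m).image (fun t => pa^[t] i0)), (Fintype.card (X k) : ℝ)
          = (Fintype.card (X (pa (pa^[m] i0))) : ℝ) *
            ∏ k ∈ Finset.univ \ insert (pa^[m+1] i0)
              ((Finset.range (m+1)).image (fun t => pa^[t] i0)), (Fintype.card (X k) : ℝ) := by
        rw [← Finset.mul_prod_erase _ _ hmem, hiter]
        refine congrArg _ ?_
        refine Finset.prod_congr ?_ fun _ _ => rfl
        ext k
        simp only [Finset.mem_erase, Finset.mem_sdiff, Finset.mem_univ, true_and,
          Finset.mem_insert, hrange, ← hiter]
        tauto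
      have hcard : (Fintype.card (X (pa (pa^[m] i0))) : ℝ) ≠ 0 := by
        exact_mod_cast Fintype.card_ne_zero
      apply mul_left_cancel₀ hcard
      rw [hsum1, hsum2, hih, hprodsplit]
      ring

lemma find_inj (htree : ∀ i, ∃ k, pa^[k] i = r) (i0 : Fin d) :
    ∀ s t, s ≤ Nat.find (htree i0) → t ≤ Nat.find (htree i0) →
      pa^[s] i0 = pa^[t] i0 → s = t := by
  have aux : ∀ s t, s < t → t ≤ Nat.find (htree i0) → pa^[s] i0 = pa^[t] i0 → False := by
    intro s t hst ht heq
    have hshift : ∀ u, pa^[s + u] i0 = pa^[t + u] i0 := by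
      intro u
      induction u with
      | zero => simpa using heq
      | succ u ihu =>
        have h1 : pa^[s + (u+1)] i0 = pa (pa^[s+u] i0) := by
          rw [← Nat.add_assoc, Function.iterate_succ_apply']
        have h2 : pa^[t + (u+1)] i0 = pa (pa^[t+u] i0) := by
          rw [← Nat.add_assoc, Function.iterate_succ_apply']
        rw [h1, h2, ihu]
    have hr : pa^[s + (Nat.find (htree i0) - t)] i0 = r := by
      rw [hshift, Nat.add_sub_cancel' ht]
      exact Nat.find_spec (htree i0)
    have hle : Nat.find (htree i0) ≤ s + (Nat.find (htree i0) - t) := Nat.find_le hr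
    omega
  intro s t hs ht heq
  rcases lt_trichotomy s t with h | h | h
  · exact absurd heq (fun he => aux s t h ht he)
  · exact h
  · exact absurd heq.symm (fun he => aux t s h hs he)

lemma marg_eq_sum_mul (P : (∀ i, X i) → ℝ) (i : Fin d) (a : X i) :
    marg P i a = ∑ x, P x * (if x i = a then (1:ℝ) else 0) := by
  unfold marg
  refine Finset.sum_congr rfl fun x _ => ?_
  by_cases h : x i = a <;> simp [h]

lemma pairMarg_eq_sum_mul (P : (∀ i, X i) → ℝ) (i j : Fin d) (a : X i) (b : X j) :
    pairMarg P i j (a, b) = ∑ x, P x * (if x i = a ∧ x j = b then (1:ℝ) else 0) := by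
  unfold pairMarg
  refine Finset.sum_congr rfl fun x _ => ?_
  by_cases h : x i = a ∧ x j = b <;> simp [h]

lemma treeProj_pos (P : (∀ i, X i) → ℝ) (hP : ∀ x, 0 < P x)
    (htree : ∀ i, ∃ k, pa^[k] i = r) (x : ∀ i, X i) : 0 < treeProj P r pa x := by
  unfold treeProj
  refine mul_pos (marg_pos P hP r (x r)) (Finset.prod_pos fun i hi => ?_)
  have hir : i ≠ r := (Finset.mem_filter.1 hi).2
  exact div_pos
    (pairMarg_pos P hP i (pa i) (Ne.symm (pi_ne_self htree i hir)) (x i) (x (pa i)))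
    (marg_pos P hP (pa i) (x (pa i)))

lemma prodcard_ne (S : Finset (Fin d)) : (∏ i ∈ S, (Fintype.card (X i) : ℝ)) ≠ 0 :=
  Finset.prod_ne_zero_iff.2 fun i _ => by exact_mod_cast (Fintype.card_ne_zero (α := X i))

lemma Sfact1 (r : Fin d) : r ∉ Finset.univ.filter (fun i => i ≠ r) := by simp

lemma Sfact2 (r : Fin d) (pa : Fin d → Fin d) :
    ∀ i ∈ Finset.univ.filter (fun i => i ≠ r),
      pa i ∈ Finset.univ.filter (fun i => i ≠ r) ∨ pa i = r := by
  intro i _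
  by_cases h : pa i = r
  · right; exact h
  · left; simp [h]

lemma treeProj_sum (P : (∀ i, X i) → ℝ) (hP : ∀ x, 0 < P x) (hPsum : ∑ x, P x = 1)
    (htree : ∀ i, ∃ k, pa^[k] i = r) : ∑ x, treeProj P r pa x = 1 := by
  have h := prune P hP htree (Finset.univ.filter (fun i => i ≠ r)).card
    (Finset.univ.filter (fun i => i ≠ r)) le_rfl (Sfact1 r) (Sfact2 r pa)
    ∅ (Finset.empty_subset _) (by simp) (fun _ => 1) (fun _ _ _ _ _ => rfl)
  simp only [Finset.prod_empty, mul_one, Finset.sdiff_empty] at h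
  have hL : ∑ x : ∀ k, X k, marg P r (x r) = ∏ k ∈ Finset.univ.erase r, (Fintype.card (X k) : ℝ) := by
    rw [sum_fun_one r (marg P r), sum_marg, hPsum, mul_one]
  rw [hL] at h
  have hfe : Finset.univ.filter (fun i => i ≠ r) = Finset.univ.erase r := Finset.filter_ne' _ _
  rw [hfe] at h
  have := mul_left_cancel₀ (prodcard_ne (X := X) (Finset.univ.erase r)) (h.symm.trans (mul_one _).symm)
  unfold treeProj
  rw [← this]
  refine Finset.sum_congr rfl fun x _ => ?_
  rw [hfe]

lemma treeProj_marg_r (P : (∀ i, X i) → ℝ) (hP : ∀ x, 0 < P x)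
    (htree : ∀ i, ∃ k, pa^[k] i = r) : marg (treeProj P r pa) r = marg P r := by
  funext a
  have h := prune P hP htree (Finset.univ.filter (fun i => i ≠ r)).card
    (Finset.univ.filter (fun i => i ≠ r)) le_rfl (Sfact1 r) (Sfact2 r pa)
    ∅ (Finset.empty_subset _) (by simp)
    (fun x => if x r = a then (1:ℝ) else 0)
    (fun x j b _ hjr => by simp only [Function.update_of_ne (Ne.symm hjr)])
  simp only [Finset.prod_empty, mul_one, Finset.sdiff_empty] at h
  have hL : ∑ x : ∀ k, X k, marg P r (x r) * (if x r = a then (1:ℝ) else 0)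
      = (∏ k ∈ Finset.univ.erase r, (Fintype.card (X k) : ℝ)) * marg P r a := by
    rw [sum_fun_one r (fun c => marg P r c * (if c = a then (1:ℝ) else 0))]
    congr 1
    calc ∑ c, marg P r c * (if c = a then (1:ℝ) else 0)
        = ∑ c, (if c = a then marg P r c else 0) := by
          refine Finset.sum_congr rfl fun c _ => ?_
          by_cases hc : c = a <;> simp [hc]
      _ = marg P r a := by rw [Finset.sum_ite_eq']; simp
  rw [hL] at h
  have hfe : Finset.univ.filter (fun i => i ≠ r) = Finset.univ.erase r := Finset.filter_ne' _ _
  rw [hfe] at h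
  have hR : ∑ x, treeProj P r pa x * (if x r = a then (1:ℝ) else 0)
      = marg (treeProj P r pa) r a := (marg_eq_sum_mul _ r a).symm
  have hQ : ∑ x, treeProj P r pa x * (if x r = a then (1:ℝ) else 0)
      = ∑ x : ∀ k, X k, (marg P r (x r) *
          ∏ i ∈ Finset.univ.erase r, condProb P i (pa i) (x i) (x (pa i)))
          * (if x r = a then (1:ℝ) else 0) := by
    refine Finset.sum_congr rfl fun x _ => ?_
    unfold treeProj
    rw [hfe]
  rw [← hR, hQ]
  exact (mul_left_cancel₀ (prodcard_ne (X := X) (Finset.univ.erase r)) h).symm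

lemma treeProj_pairMarg (P : (∀ i, X i) → ℝ) (hP : ∀ x, 0 < P x)
    (htree : ∀ i, ∃ k, pa^[k] i = r) (i0 : Fin d) (hi0 : i0 ≠ r) :
    pairMarg (treeProj P r pa) i0 (pa i0) = pairMarg P i0 (pa i0) := by
  funext p
  obtain ⟨a, b⟩ := p
  set m := Nat.find (htree i0) with hm_def
  have hm : pa^[m] i0 = r := Nat.find_spec (htree i0)
  have hinj := find_inj htree i0
  have hm1 : 1 ≤ m := by
    rcases Nat.eq_zero_or_pos m with h | h
    · rw [h] at hm; simp at hm; exact absurd hm hi0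
    · exact h
  set C : Finset (Fin d) := (Finset.range m).image (fun t => pa^[t] i0) with hC_def
  have hmemC : ∀ t, t < m → pa^[t] i0 ∈ C := fun t ht =>
    Finset.mem_image.2 ⟨t, Finset.mem_range.2 ht, rfl⟩
  have hCr : r ∉ C := by
    intro h
    obtain ⟨t, ht, hteq⟩ := Finset.mem_image.1 h
    rw [Finset.mem_range] at ht
    rw [← hm] at hteq
    exact absurd (hinj t m (by omega) le_rfl hteq) (by omega)
  have hCS : C ⊆ Finset.univ.filter (fun i => i ≠ r) := by
    intro k hk
    refine Finset.mem_filter.2 ⟨Finset.mem_univ _, fun hkr => hCr (hkr ▸ hk)⟩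
  have hCcl : ∀ i ∈ C, pa i ∈ C ∨ pa i = r := by
    intro i hi
    obtain ⟨t, ht, hteq⟩ := Finset.mem_image.1 hi
    rw [Finset.mem_range] at ht
    replace hteq : pa^[t] i0 = i := hteq
    have hpa : pa i = pa^[t+1] i0 := by
      rw [Function.iterate_succ_apply' pa t i0, hteq]
    by_cases h : t + 1 = m
    · right; rw [hpa, h, hm]
    · left; rw [hpa]; exact hmemC (t+1) (by omega)
  have hi0C : i0 ∈ C := by
    have := hmemC 0 (by omega)
    simpa using this
  have hpai0 : ∀ j : Fin d, j ∉ C → j ≠ r → pa i0 ≠ j := by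
    intro j hjC hjr
    by_cases h1 : 1 = m
    · intro h
      apply hjr
      rw [← h, ← hm, ← h1]
      rfl
    · intro h
      apply hjC
      rw [← h]
      have := hmemC 1 (by omega)
      simpa using this
  have hprune := prune P hP htree (Finset.univ.filter (fun i => i ≠ r)).card
    (Finset.univ.filter (fun i => i ≠ r)) le_rfl (Sfact1 r) (Sfact2 r pa)
    C hCS hCcl
    (fun x => if x i0 = a ∧ x (pa i0) = b then (1:ℝ) else 0)
    (fun x j c hjC hjr => by
      have h1 : i0 ≠ j := fun h => hjC (h ▸ hi0C)
      have h2 : pa i0 ≠ j := hpai0 j hjC hjr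
      simp only [Function.update_of_ne h1, Function.update_of_ne h2])
  have hchain := chain P hP m hm1 i0 hinj
    (fun a' b' => if a' = a ∧ b' = b then (1:ℝ) else 0)
  rw [hm] at hchain
  have hsets : Finset.univ.filter (fun i => i ≠ r) \ C = Finset.univ \ insert r C := by
    ext k
    simp only [Finset.mem_sdiff, Finset.mem_filter, Finset.mem_univ, true_and,
      Finset.mem_insert]
    tauto
  have hRc : ∑ a', ∑ b', pairMarg P i0 (pa i0) (a', b') *
      (if a' = a ∧ b' = b then (1:ℝ) else 0) = pairMarg P i0 (pa i0) (a, b) := by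
    calc ∑ a', ∑ b', pairMarg P i0 (pa i0) (a', b') * (if a' = a ∧ b' = b then (1:ℝ) else 0)
        = ∑ a', (if a' = a then pairMarg P i0 (pa i0) (a', b) else 0) := by
          refine Finset.sum_congr rfl fun a' _ => ?_
          by_cases ha : a' = a
          · subst ha
            rw [if_pos rfl]
            calc ∑ b', pairMarg P i0 (pa i0) (a', b') * (if a' = a' ∧ b' = b then (1:ℝ) else 0)
                = ∑ b', (if b' = b then pairMarg P i0 (pa i0) (a', b') else 0) := by
                  refine Finset.sum_congr rfl fun b' _ => ?_
                  by_cases hb : b' = b <;> simp [hb]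
              _ = pairMarg P i0 (pa i0) (a', b) := by rw [Finset.sum_ite_eq']; simp
          · simp [ha]
      _ = pairMarg P i0 (pa i0) (a, b) := by rw [Finset.sum_ite_eq']; simp
  rw [hRc] at hchain
  rw [hsets] at hprune
  have hmain := hprune.symm.trans hchain
  have hcc := mul_left_cancel₀ (prodcard_ne (X := X) (Finset.univ \ insert r C)) hmain
  exact (pairMarg_eq_sum_mul (treeProj P r pa) i0 (pa i0) a b).trans hcc

lemma treeProj_marg (P : (∀ i, X i) → ℝ) (hP : ∀ x, 0 < P x)
    (htree : ∀ i, ∃ k, pa^[k] i = r) (i : Fin d) :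
    marg (treeProj P r pa) i = marg P i := by
  by_cases hir : i = r
  · subst hir; exact treeProj_marg_r P hP htree
  · funext a
    rw [← sum_pairMarg_fst (treeProj P r pa) i (pa i) a,
      treeProj_pairMarg P hP htree i hir, sum_pairMarg_fst]

lemma treeProj_fac (P : (∀ i, X i) → ℝ) (hP : ∀ x, 0 < P x)
    (htree : ∀ i, ∃ k, pa^[k] i = r) (x : ∀ i, X i) :
    treeProj P r pa x = marg (treeProj P r pa) r (x r) *
      ∏ i ∈ Finset.univ.filter (fun i => i ≠ r),
        condProb (treeProj P r pa) i (pa i) (x i) (x (pa i)) := by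
  have hc : ∀ i, i ≠ r → condProb (treeProj P r pa) i (pa i) = condProb P i (pa i) := by
    intro i hir
    unfold condProb
    rw [treeProj_pairMarg P hP htree i hir, treeProj_marg P hP htree (pa i)]
  rw [treeProj_marg_r P hP htree,
    Finset.prod_congr rfl (fun i hi => by rw [hc i (Finset.mem_filter.1 hi).2])]
  rfl

lemma decomp (P Q' : (∀ i, X i) → ℝ) (hQ' : ∀ x, 0 < Q' x)
    (htree : ∀ i, ∃ k, pa^[k] i = r) :
    ∑ x, P x * Real.log (marg Q' r (x r) *
        ∏ i ∈ Finset.univ.filter (fun i => i ≠ r), condProb Q' i (pa i) (x i) (x (pa i)))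
    = (∑ a, marg P r a * Real.log (marg Q' r a))
      + ∑ i ∈ Finset.univ.filter (fun i => i ≠ r),
          ∑ p : X i × X (pa i), pairMarg P i (pa i) p *
            Real.log (condProb Q' i (pa i) p.1 p.2) := by
  have hcpos : ∀ i, i ≠ r → ∀ (c : X i) (c' : X (pa i)), 0 < condProb Q' i (pa i) c c' := by
    intro i hir c c'
    exact div_pos (pairMarg_pos Q' hQ' i (pa i) (Ne.symm (pi_ne_self htree i hir)) c c')
      (marg_pos Q' hQ' (pa i) c')
  have hlog : ∀ x : ∀ k, X k, Real.log (marg Q' r (x r) *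
      ∏ i ∈ Finset.univ.filter (fun i => i ≠ r), condProb Q' i (pa i) (x i) (x (pa i)))
      = Real.log (marg Q' r (x r)) + ∑ i ∈ Finset.univ.filter (fun i => i ≠ r),
          Real.log (condProb Q' i (pa i) (x i) (x (pa i))) := by
    intro x
    rw [Real.log_mul (marg_pos Q' hQ' r (x r)).ne'
      (Finset.prod_ne_zero_iff.2 fun i hi =>
        (hcpos i (Finset.mem_filter.1 hi).2 (x i) (x (pa i))).ne'),
      Real.log_prod fun i hi =>
        (hcpos i (Finset.mem_filter.1 hi).2 (x i) (x (pa i))).ne']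
  calc ∑ x, P x * Real.log (marg Q' r (x r) *
        ∏ i ∈ Finset.univ.filter (fun i => i ≠ r), condProb Q' i (pa i) (x i) (x (pa i)))
      = ∑ x : ∀ k, X k, (P x * Real.log (marg Q' r (x r))
          + ∑ i ∈ Finset.univ.filter (fun i => i ≠ r),
              P x * Real.log (condProb Q' i (pa i) (x i) (x (pa i)))) := by
        refine Finset.sum_congr rfl fun x _ => ?_
        rw [hlog x, mul_add, Finset.mul_sum]
    _ = (∑ x : ∀ k, X k, P x * Real.log (marg Q' r (x r)))
          + ∑ x : ∀ k, X k, ∑ i ∈ Finset.univ.filter (fun i => i ≠ r),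
              P x * Real.log (condProb Q' i (pa i) (x i) (x (pa i))) := by
        rw [Finset.sum_add_distrib]
    _ = _ := by
      congr 1
      · rw [← sum_marg_mul P r (fun c => Real.log (marg Q' r c))]
      · rw [Finset.sum_comm]
        refine Finset.sum_congr rfl fun i hi => ?_
        rw [← sum_pairMarg_mul P i (pa i) (fun c c' => Real.log (condProb Q' i (pa i) c c'))]

lemma decomp_val (P : (∀ i, X i) → ℝ) (hP : ∀ x, 0 < P x)
    (htree : ∀ i, ∃ k, pa^[k] i = r) :
    (∑ a, marg P r a * Real.log (marg P r a))
      + ∑ i ∈ Finset.univ.filter (fun i => i ≠ r),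
          ∑ p : X i × X (pa i), pairMarg P i (pa i) p *
            Real.log (condProb P i (pa i) p.1 p.2)
    = (∑ i ∈ Finset.univ.filter (fun i => i ≠ r), mutualInfo (pairMarg P i (pa i)))
      - ∑ i, entropy (marg P i) := by
  have hent : ∀ {A : Type _} [Fintype A] (F : A → ℝ),
      ∑ a, F a * Real.log (F a) = -(entropy F) := by
    intro A _ F
    unfold entropy
    rw [← Finset.sum_neg_distrib]
    simp
  have hterm : ∀ i, i ≠ r →
      ∑ p : X i × X (pa i), pairMarg P i (pa i) p * Real.log (condProb P i (pa i) p.1 p.2)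
      = mutualInfo (pairMarg P i (pa i)) - entropy (marg P i) := by
    intro i hir
    have hij : i ≠ pa i := Ne.symm (pi_ne_self htree i hir)
    have hsplit : ∀ p : X i × X (pa i),
        pairMarg P i (pa i) p * Real.log (condProb P i (pa i) p.1 p.2)
        = pairMarg P i (pa i) p * Real.log (pairMarg P i (pa i) p)
          - pairMarg P i (pa i) p * Real.log (marg P (pa i) p.2) := by
      intro p
      unfold condProb
      rw [Real.log_div (pairMarg_pos P hP i (pa i) hij p.1 p.2).ne'
        (marg_pos P hP (pa i) p.2).ne', mul_sub]
    rw [Finset.sum_congr rfl fun p _ => hsplit p, Finset.sum_sub_distrib]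
    have h1 : ∑ p : X i × X (pa i), pairMarg P i (pa i) p * Real.log (pairMarg P i (pa i) p)
        = -(entropy (pairMarg P i (pa i))) := hent _
    have h2 : ∑ p : X i × X (pa i), pairMarg P i (pa i) p * Real.log (marg P (pa i) p.2)
        = -(entropy (marg P (pa i))) := by
      rw [Fintype.sum_prod_type, Finset.sum_comm]
      calc ∑ b, ∑ a, pairMarg P i (pa i) (a, b) * Real.log (marg P (pa i) b)
          = ∑ b, marg P (pa i) b * Real.log (marg P (pa i) b) := by
            refine Finset.sum_congr rfl fun b _ => ?_
            rw [← Finset.sum_mul, sum_pairMarg_snd]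
        _ = -(entropy (marg P (pa i))) := hent _
    have h3 : mutualInfo (pairMarg P i (pa i))
        = entropy (marg P i) + entropy (marg P (pa i)) - entropy (pairMarg P i (pa i)) := by
      unfold mutualInfo
      congr 2
      · congr 1
        funext a
        exact sum_pairMarg_fst P i (pa i) a
      · congr 1
        funext b
        exact sum_pairMarg_snd P i (pa i) b
    rw [h1, h2, h3]
    ring
  rw [hent (marg P r), Finset.sum_congr rfl fun i hi => hterm i (Finset.mem_filter.1 hi).2,
    Finset.sum_sub_distrib]
  have hsplit : ∑ i, entropy (marg P i)
      = entropy (marg P r) + ∑ i ∈ Finset.univ.filter (fun i => i ≠ r), entropy (marg P i) := by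
    rw [Finset.filter_ne']
    exact (Finset.add_sum_erase Finset.univ (fun i => entropy (marg P i))
      (Finset.mem_univ r)).symm
  rw [hsplit]
  ring

lemma gibbs_cond (P Q : (∀ i, X i) → ℝ) (hP : ∀ x, 0 < P x) (hQ : ∀ x, 0 < Q x)
    (i : Fin d) (hij : i ≠ pa i) :
    ∑ p : X i × X (pa i), pairMarg P i (pa i) p * Real.log (condProb Q i (pa i) p.1 p.2)
      ≤ ∑ p : X i × X (pa i), pairMarg P i (pa i) p *
          Real.log (condProb P i (pa i) p.1 p.2) := by
  set Pp : X i × X (pa i) → ℝ := pairMarg P i (pa i) with hPp_def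
  set Qq : X i × X (pa i) → ℝ :=
    fun p => condProb Q i (pa i) p.1 p.2 * marg P (pa i) p.2 with hQq_def
  have hPp_pos : ∀ p, 0 < Pp p := by
    intro p
    obtain ⟨a, b⟩ := p
    exact pairMarg_pos P hP i (pa i) hij a b
  have hcondP_pos : ∀ p : X i × X (pa i), 0 < condProb P i (pa i) p.1 p.2 := by
    intro p
    obtain ⟨a, b⟩ := p
    exact div_pos (pairMarg_pos P hP i (pa i) hij a b) (marg_pos P hP (pa i) b)
  have hcondQ_pos : ∀ p : X i × X (pa i), 0 < condProb Q i (pa i) p.1 p.2 := by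
    intro p
    obtain ⟨a, b⟩ := p
    exact div_pos (pairMarg_pos Q hQ i (pa i) hij a b) (marg_pos Q hQ (pa i) b)
  have hQq_pos : ∀ p, 0 < Qq p :=
    fun p => mul_pos (hcondQ_pos p) (marg_pos P hP (pa i) p.2)
  have hPsumx : ∑ p, Pp p = ∑ x, P x := by
    have := sum_pairMarg_mul P i (pa i) (fun _ _ => (1:ℝ))
    simpa using this
  have hQsumx : ∑ p, Qq p = ∑ x, P x := by
    rw [Fintype.sum_prod_type, Finset.sum_comm]
    calc ∑ b, ∑ a, Qq (a, b)
        = ∑ b, marg P (pa i) b := by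
          refine Finset.sum_congr rfl fun b _ => ?_
          simp only [hQq_def]
          rw [← Finset.sum_mul, sum_condProb_eq_one Q hQ i (pa i) b, one_mul]
      _ = ∑ x, P x := sum_marg P (pa i)
  have hgb := gibbs_ineq Pp Qq hPp_pos hQq_pos (le_of_eq (hQsumx.trans hPsumx.symm))
  have hPp_eq : ∀ p : X i × X (pa i),
      Pp p = condProb P i (pa i) p.1 p.2 * marg P (pa i) p.2 := by
    intro p
    obtain ⟨a, b⟩ := p
    simp only [hPp_def, condProb]
    rw [div_mul_cancel₀ _ (marg_pos P hP (pa i) b).ne']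
  have e1 : ∑ p, Pp p * Real.log (Qq p)
      = (∑ p, Pp p * Real.log (condProb Q i (pa i) p.1 p.2))
        + ∑ p, Pp p * Real.log (marg P (pa i) p.2) := by
    rw [← Finset.sum_add_distrib]
    refine Finset.sum_congr rfl fun p _ => ?_
    simp only [hQq_def]
    rw [Real.log_mul (hcondQ_pos p).ne' (marg_pos P hP (pa i) p.2).ne', mul_add]
  have e2 : ∑ p, Pp p * Real.log (Pp p)
      = (∑ p, Pp p * Real.log (condProb P i (pa i) p.1 p.2))
        + ∑ p, Pp p * Real.log (marg P (pa i) p.2) := by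
    rw [← Finset.sum_add_distrib]
    refine Finset.sum_congr rfl fun p _ => ?_
    rw [hPp_eq p, Real.log_mul (hcondP_pos p).ne' (marg_pos P hP (pa i) p.2).ne', mul_add]
  rw [e1, e2] at hgb
  linarith

lemma emp_expect {n : ℕ} (hn : 1 ≤ n) (z : Fin n → (∀ i, X i)) (F : (∀ i, X i) → ℝ) :
    ∑ k, F (z k) = (n : ℝ) * ∑ x, empDist z x * F x := by
  have hn0 : (n : ℝ) ≠ 0 := Nat.cast_ne_zero.2 (by omega)
  symm
  unfold empDist
  calc (n : ℝ) * ∑ x : ∀ i, X i, (∑ k, if z k = x then (1:ℝ) else 0) / n * F x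
      = ∑ x : ∀ i, X i, (∑ k, if z k = x then (1:ℝ) else 0) * F x := by
        rw [Finset.mul_sum]
        refine Finset.sum_congr rfl fun x _ => ?_
        field_simp
    _ = ∑ x : ∀ i, X i, ∑ k, (if z k = x then (1:ℝ) else 0) * F x := by
        refine Finset.sum_congr rfl fun x _ => Finset.sum_mul _ _ _
    _ = ∑ k, ∑ x : ∀ i, X i, (if z k = x then (1:ℝ) else 0) * F x := Finset.sum_comm
    _ = ∑ k, F (z k) := by
        refine Finset.sum_congr rfl fun k _ => ?_
        simp [ite_mul, Finset.sum_ite_eq]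

lemma empDist_sum {n : ℕ} (hn : 1 ≤ n) (z : Fin n → (∀ i, X i)) :
    ∑ x, empDist z x = 1 := by
  have h := emp_expect (X := X) hn z (fun _ => 1)
  simp only [mul_one] at h
  have hcard : ∑ k : Fin n, (1:ℝ) = n := by simp
  have hn0 : (n : ℝ) ≠ 0 := Nat.cast_ne_zero.2 (by omega)
  rw [hcard] at h
  field_simp at h
  exact h.symm

end MLAux

/-- Maximum-likelihood tree structure (equation (2) of the paper): for a rooted spanning
tree `T` (root `r`, parent map `π`), the maximum of the log-likelihood `Σ_k ln Q(z_k)` over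
all everywhere-positive pmfs `Q` that factorize along `T` equals
`n (Σ_{i ≠ r} I(P̂_{X_i, X_{π(i)}}) − Σ_i H(P̂_{X_i}))`, where `P̂` is the empirical pmf of
the sample. In particular, since `Σ_i H(P̂_{X_i})` does not depend on `T`, the spanning tree
maximizing the likelihood is exactly the maximum-weight spanning tree with edge weights
given by the empirical mutual informations. -/
theorem maxLoglikelihood_tree_eq {d : ℕ} (hd : 2 ≤ d) {X : Fin d → Type*}
    [∀ i, Fintype (X i)] [∀ i, Nonempty (X i)] [∀ i, DecidableEq (X i)]
    (n : ℕ) (hn : 1 ≤ n) (z : Fin n → (∀ i, X i))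
    (hemp : ∀ x : ∀ i, X i, 0 < empDist z x)
    (r : Fin d) (π : Fin d → Fin d)
    (htree : ∀ i : Fin d, ∃ k : ℕ, π^[k] i = r) :
    IsGreatest
      {L : ℝ | ∃ Q : (∀ i, X i) → ℝ, (∀ x, 0 < Q x) ∧ (∑ x, Q x = 1) ∧
        (∀ x, Q x = marg Q r (x r) *
          ∏ i ∈ Finset.univ.filter (fun i => i ≠ r), condProb Q i (π i) (x i) (x (π i))) ∧
        L = ∑ k, Real.log (Q (z k))}
      ((n : ℝ) *
        ((∑ i ∈ Finset.univ.filter (fun i => i ≠ r),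
            mutualInfo (pairMarg (empDist z) i (π i))) -
          ∑ i, entropy (marg (empDist z) i))) := by
  have hPsum : ∑ x, empDist z x = 1 := empDist_sum hn z
  have hval := decomp_val (pa := π) (empDist z) hemp htree
  have hdec := decomp (pa := π) (empDist z) (empDist z) hemp htree
  constructor
  · refine ⟨treeProj (empDist z) r π, treeProj_pos (empDist z) hemp htree,
      treeProj_sum (empDist z) hemp hPsum htree,
      treeProj_fac (empDist z) hemp htree, ?_⟩
    rw [emp_expect hn z (fun x => Real.log (treeProj (empDist z) r π x))]
    congr 1
    have hunf : ∑ x, empDist z x * Real.log (treeProj (empDist z) r π x)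
        = ∑ x, empDist z x * Real.log (marg (empDist z) r (x r) *
            ∏ i ∈ Finset.univ.filter (fun i => i ≠ r),
              condProb (empDist z) i (π i) (x i) (x (π i))) := rfl
    exact (hunf.trans (hdec.trans hval)).symm
  · rintro L ⟨Q, hQpos, hQsum, hQfac, rfl⟩
    rw [emp_expect hn z (fun x => Real.log (Q x))]
    refine mul_le_mul_of_nonneg_left ?_ (Nat.cast_nonneg n)
    have h1 : ∑ x, empDist z x * Real.log (Q x)
        = ∑ x, empDist z x * Real.log (marg Q r (x r) *
            ∏ i ∈ Finset.univ.filter (fun i => i ≠ r),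
              condProb Q i (π i) (x i) (x (π i))) := by
      refine Finset.sum_congr rfl fun x _ => ?_
      rw [← hQfac x]
    rw [h1, decomp (pa := π) (empDist z) Q hQpos htree]
    calc (∑ a, marg (empDist z) r a * Real.log (marg Q r a))
          + ∑ i ∈ Finset.univ.filter (fun i => i ≠ r),
              ∑ p : X i × X (π i), pairMarg (empDist z) i (π i) p *
                Real.log (condProb Q i (π i) p.1 p.2)
        ≤ (∑ a, marg (empDist z) r a * Real.log (marg (empDist z) r a))
          + ∑ i ∈ Finset.univ.filter (fun i => i ≠ r),
              ∑ p : X i × X (π i), pairMarg (empDist z) i (π i) p *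
                Real.log (condProb (empDist z) i (π i) p.1 p.2) := by
          refine add_le_add ?_ (Finset.sum_le_sum fun i hi => ?_)
          · exact gibbs_ineq (marg (empDist z) r) (marg Q r)
              (marg_pos (empDist z) hemp r) (marg_pos Q hQpos r)
              (by rw [sum_marg, sum_marg, hQsum, hPsum])
          · exact gibbs_cond (empDist z) Q hemp hQpos i
              (Ne.symm (pi_ne_self htree i (Finset.mem_filter.1 hi).2))
      _ = _ := hval
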